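/- Fix integers d ≥ 1 and r ≥ 0, let q = binom(r+d, d) and p(u) = (u^s : s ∈ ℕ^d, |s| ≤ r) ∈ ℝ^q. Let M = ∫_{(−1,1)^d} p(u) p(u)ᵀ du and v = ∫_{(0,1) × (−1,1)^{d−1}} p(u) du. Then M is positive definite and eᵀ M^{−1} v = 1/2, where e ∈ ℝ^q is the standard coordinate vector indexed by the zero multi-index s = 0. -/

import Mathlib

open MeasureTheory Set
open scoped BigOperators

noncomputable section

/-- Multi-indices of total degree at most `r` (there are `binom(r+d,d)` of them). -/
abbrev MIdx (d r : ℕ) := {s : Fin d → Fin (r + 1) // (∑ k, (s k : ℕ)) ≤ r}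

/-- The zero multi-index. -/
def mZero (d r : ℕ) : MIdx d r := ⟨fun _ => 0, by simp⟩

/-- Monomial associated with a multi-index: `u^s = u_1^{s_1} ⋯ u_d^{s_d}`. -/
def mono {d r : ℕ} (s : MIdx d r) (u : Fin d → ℝ) : ℝ := ∏ k, u k ^ (s.val k : ℕ)

lemma ioo_pow_integral (a b : ℝ) (hab : a ≤ b) (n : ℕ) :
    ∫ x in Ioo a b, x ^ n = (b ^ (n + 1) - a ^ (n + 1)) / (n + 1) := by
  rw [← integral_Ioc_eq_integral_Ioo, ← intervalIntegral.integral_of_le hab,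
    integral_pow]

lemma pi_setIntegral {d : ℕ} (S : Fin d → Set ℝ) (hS : ∀ k, MeasurableSet (S k))
    (f : Fin d → ℝ → ℝ) :
    ∫ u in Set.univ.pi S, ∏ k, f k (u k) = ∏ k, ∫ x in S k, f k x := by
  rw [← MeasureTheory.integral_indicator (MeasurableSet.univ_pi hS)]
  have h : ∀ u : Fin d → ℝ, (Set.univ.pi S).indicator (fun u => ∏ k, f k (u k)) u
      = ∏ k, (S k).indicator (f k) (u k) := by
    intro u
    by_cases hu : u ∈ Set.univ.pi S
    · rw [Set.indicator_of_mem hu]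
      exact Finset.prod_congr rfl fun k _ => (Set.indicator_of_mem (hu k trivial) _).symm
    · rw [Set.indicator_of_notMem hu]
      rw [Set.mem_univ_pi] at hu; push_neg at hu
      obtain ⟨k, hk⟩ := hu
      exact (Finset.prod_eq_zero (Finset.mem_univ k) (Set.indicator_of_notMem hk _)).symm
  simp_rw [h]
  rw [MeasureTheory.integral_fintype_prod_volume_eq_prod]
  exact Finset.prod_congr rfl fun k _ => MeasureTheory.integral_indicator (hS k)

theorem half_cube_moment_identity
    (d r : ℕ) (hd : 1 ≤ d)
    (M : Matrix (MIdx d r) (MIdx d r) ℝ)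
    (hM : M = fun s t => ∫ u in {u : Fin d → ℝ | ∀ k, u k ∈ Set.Ioo (-1 : ℝ) 1},
      mono s u * mono t u)
    (v : MIdx d r → ℝ)
    (hv : v = fun s => ∫ u in {u : Fin d → ℝ | u ⟨0, hd⟩ ∈ Set.Ioo (0 : ℝ) 1 ∧
      ∀ k, k ≠ ⟨0, hd⟩ → u k ∈ Set.Ioo (-1 : ℝ) 1}, mono s u) :
    M.PosDef ∧
      dotProduct (Pi.single (mZero d r) (1 : ℝ)) (M⁻¹.mulVec v) = 1 / 2 := by
  classical
  set i0 : Fin d := ⟨0, hd⟩ with hi0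
  set c : ℕ → ℝ := fun n => (1 + (-1 : ℝ) ^ n) / (n + 1) with hc
  set a : ℕ → ℝ := fun n => 1 / ((n : ℝ) + 1) with ha
  -- one dimensional integrals
  have hnum : ∀ n : ℕ, ((1 : ℝ) ^ (n + 1) - (-1 : ℝ) ^ (n + 1)) = 1 + (-1 : ℝ) ^ n := by
    intro n; rw [pow_succ]; ring
  have hc1 : ∀ n : ℕ, ∫ x in Ioo (-1 : ℝ) 1, x ^ n = c n := by
    intro n
    rw [ioo_pow_integral (-1) 1 (by norm_num) n, hnum n]
  have ha1 : ∀ n : ℕ, ∫ x in Ioo (0 : ℝ) 1, x ^ n = a n := by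
    intro n
    rw [ioo_pow_integral 0 1 (by norm_num) n]
    simp [ha]
  have hca : ∀ n : ℕ, c n = (1 + (-1 : ℝ) ^ n) * a n := by
    intro n; rw [hc, ha]; rw [mul_one_div]
  -- box and sets
  set box : Set (Fin d → ℝ) := Set.univ.pi fun _ => Ioo (-1 : ℝ) 1 with hbox
  have hboxeq : {u : Fin d → ℝ | ∀ k, u k ∈ Set.Ioo (-1 : ℝ) 1} = box := by
    ext u; simp [hbox, Set.mem_pi]
  have hvseteq : {u : Fin d → ℝ | u i0 ∈ Set.Ioo (0 : ℝ) 1 ∧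
      ∀ k, k ≠ i0 → u k ∈ Set.Ioo (-1 : ℝ) 1}
      = Set.univ.pi fun k => if k = i0 then Ioo (0 : ℝ) 1 else Ioo (-1 : ℝ) 1 := by
    ext u
    simp only [mem_setOf_eq, Set.mem_pi, Set.mem_univ, forall_true_left]
    constructor
    · rintro ⟨h1, h2⟩ k
      by_cases hk : k = i0
      · subst hk; rw [if_pos rfl]; exact h1
      · rw [if_neg hk]; exact h2 k hk
    · intro h
      refine ⟨by have := h i0; rwa [if_pos rfl] at this, fun k hk => ?_⟩
      have := h k; rwa [if_neg hk] at this
  -- entry formulas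
  have hMbox : ∀ s t : MIdx d r, M s t = ∫ u in box, mono s u * mono t u := by
    intro s t; rw [hM, hboxeq]
  have hMF : ∀ s t : MIdx d r, M s t = ∏ k, c ((s.val k : ℕ) + (t.val k : ℕ)) := by
    intro s t
    rw [hMbox s t]
    have : ∀ u : Fin d → ℝ, mono s u * mono t u
        = ∏ k, u k ^ ((s.val k : ℕ) + (t.val k : ℕ)) := by
      intro u
      rw [mono, mono, ← Finset.prod_mul_distrib]
      exact Finset.prod_congr rfl fun k _ => (pow_add _ _ _).symm
    simp_rw [this]
    rw [hbox, pi_setIntegral _ (fun _ => measurableSet_Ioo)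
      (fun k x => x ^ ((s.val k : ℕ) + (t.val k : ℕ)))]
    exact Finset.prod_congr rfl fun k _ => hc1 _
  have hvF : ∀ s : MIdx d r,
      v s = ∏ k, (if k = i0 then a (s.val k : ℕ) else c (s.val k : ℕ)) := by
    intro s
    rw [hv]
    show (∫ u in {u : Fin d → ℝ | u i0 ∈ Set.Ioo (0 : ℝ) 1 ∧
      ∀ k, k ≠ i0 → u k ∈ Set.Ioo (-1 : ℝ) 1}, mono s u) = _
    rw [hvseteq]
    have hthis : ∀ u : Fin d → ℝ, mono s u = ∏ k, u k ^ (s.val k : ℕ) := fun u => rfl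
    simp_rw [hthis]
    have hmeas : ∀ k : Fin d,
        MeasurableSet (if k = i0 then Ioo (0 : ℝ) 1 else Ioo (-1 : ℝ) 1) := by
      intro k
      by_cases hk : k = i0
      · rw [if_pos hk]; exact measurableSet_Ioo
      · rw [if_neg hk]; exact measurableSet_Ioo
    rw [pi_setIntegral _ hmeas (fun k x => x ^ (s.val k : ℕ))]
    refine Finset.prod_congr rfl fun k _ => ?_
    by_cases hk : k = i0
    · rw [if_pos hk, if_pos hk, ha1]
    · rw [if_neg hk, if_neg hk, hc1]
  -- continuity / integrability helpers
  have hmono_cont : ∀ s : MIdx d r, Continuous (mono s) := fun s =>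
    continuous_finset_prod _ fun k _ => (continuous_apply k).pow _
  have hboxopen : IsOpen box := isOpen_set_pi finite_univ fun _ _ => isOpen_Ioo
  have hint : ∀ g : (Fin d → ℝ) → ℝ, Continuous g → IntegrableOn g box := by
    intro g hg
    have hcpt : IsCompact (Set.univ.pi fun _ : Fin d => Icc (-1 : ℝ) 1) :=
      isCompact_univ_pi fun _ => isCompact_Icc
    exact (hg.continuousOn.integrableOn_compact hcpt).mono_set
      (Set.pi_mono fun k _ => Ioo_subset_Icc_self)
  -- positive definiteness
  have hPD : M.PosDef := by
    rw [Matrix.posDef_iff_dotProduct_mulVec]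
    constructor
    · show M.conjTranspose = M
      ext s t
      simp only [Matrix.conjTranspose_apply, star_trivial]
      rw [hMF s t, hMF t s]
      exact Finset.prod_congr rfl fun k _ => by rw [add_comm]
    · intro x hx
      set f : (Fin d → ℝ) → ℝ := fun u => ∑ s, x s * mono s u with hf
      have hfc : Continuous f :=
        continuous_finset_sum _ fun s _ => continuous_const.mul (hmono_cont s)
      have hsx : star x = x := funext fun s => star_trivial _
      have hquad : dotProduct (star x) (M.mulVec x) = ∫ u in box, f u ^ 2 := by
        rw [hsx]
        have h1 : ∀ s t : MIdx d r, x s * (M s t * x t)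
            = ∫ u in box, (x s * mono s u) * (x t * mono t u) := by
          intro s t
          rw [hMbox s t, ← MeasureTheory.integral_mul_const, ← MeasureTheory.integral_const_mul]
          congr 1; funext u; ring
        calc dotProduct x (M.mulVec x)
            = ∑ s, ∑ t, ∫ u in box, (x s * mono s u) * (x t * mono t u) := by
              rw [dotProduct]
              refine Finset.sum_congr rfl fun s _ => ?_
              rw [Matrix.mulVec, dotProduct, Finset.mul_sum]
              exact Finset.sum_congr rfl fun t _ => h1 s t
          _ = ∫ u in box, ∑ s, ∑ t, (x s * mono s u) * (x t * mono t u) := by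
              rw [MeasureTheory.integral_finset_sum]
              · exact Finset.sum_congr rfl fun s _ =>
                  (MeasureTheory.integral_finset_sum _ fun t _ =>
                    hint _ ((continuous_const.mul (hmono_cont s)).mul
                      (continuous_const.mul (hmono_cont t)))).symm
              · intro s _
                exact integrable_finset_sum _ fun t _ =>
                  hint _ ((continuous_const.mul (hmono_cont s)).mul
                    (continuous_const.mul (hmono_cont t)))
          _ = ∫ u in box, f u ^ 2 := by
              congr 1; funext u
              rw [sq, hf, Finset.sum_mul_sum]
      have hex : ∃ u0 ∈ box, f u0 ≠ 0 := by
        by_contra hcon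
        push_neg at hcon
        set m : MIdx d r → (Fin d →₀ ℕ) :=
          fun s => Finsupp.equivFunOnFinite.symm fun k => (s.val k : ℕ) with hm
        have hm_inj : Function.Injective m := by
          intro s t hst
          have := Finsupp.equivFunOnFinite.symm.injective hst
          refine Subtype.ext (funext fun k => ?_)
          have hk := congrFun this k
          exact Fin.ext hk
        set P : MvPolynomial (Fin d) ℝ :=
          ∑ s : MIdx d r, MvPolynomial.monomial (m s) (x s) with hP
        have heval : ∀ u : Fin d → ℝ, MvPolynomial.eval u P = f u := by
          intro u
          rw [hP, map_sum]
          refine Finset.sum_congr rfl fun s _ => ?_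
          rw [MvPolynomial.eval_monomial]
          congr 1
          rw [mono]
          rw [Finsupp.prod_fintype _ _ fun k => pow_zero (u k)]
          exact Finset.prod_congr rfl fun k _ => by simp [hm]
        have hfzero : ∀ u : Fin d → ℝ, f u = 0 := by
          have hA : AnalyticOnNhd ℝ (fun u : Fin d → ℝ => MvPolynomial.eval u P) univ :=
            AnalyticOnNhd.eval_mvPolynomial P
          have h0box : (0 : Fin d → ℝ) ∈ box := by
            intro k _; exact ⟨by norm_num, by norm_num⟩
          have hev : (fun u : Fin d → ℝ => MvPolynomial.eval u P) =ᶠ[nhds 0] 0 :=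
            Filter.eventuallyEq_of_mem (hboxopen.mem_nhds h0box)
              (fun u hu => by rw [heval]; exact hcon u hu)
          have hEq := hA.eqOn_zero_of_preconnected_of_eventuallyEq_zero
            isPreconnected_univ (Set.mem_univ 0) hev
          intro u
          rw [← heval u]
          exact hEq (Set.mem_univ u)
        have hP0 : P = 0 := by
          apply MvPolynomial.funext
          intro u
          rw [heval u, hfzero u, map_zero]
        apply hx
        funext t
        have hco := congrArg (MvPolynomial.coeff (m t)) hP0
        rw [hP, MvPolynomial.coeff_zero, MvPolynomial.coeff_sum] at hco
        simp_rw [MvPolynomial.coeff_monomial] at hco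
        rw [Finset.sum_eq_single t (fun b _ hb => if_neg fun hc => hb (hm_inj hc))
          (fun ht => absurd (Finset.mem_univ t) ht), if_pos rfl] at hco
        exact hco
      obtain ⟨u0, hu0box, hu0⟩ := hex
      rw [hquad]
      refine (MeasureTheory.setIntegral_pos_iff_support_of_nonneg_ae
        (Filter.Eventually.of_forall fun u => sq_nonneg (f u))
        (hint _ (hfc.pow 2))).2 ?_
      have hsub : ({u | f u ≠ 0} ∩ box) ⊆ Function.support (fun u => f u ^ 2) ∩ box := by
        rintro u ⟨hu1, hu2⟩
        exact ⟨pow_ne_zero 2 hu1, hu2⟩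
      refine lt_of_lt_of_le ?_ (measure_mono hsub)
      refine ((isOpen_ne_fun hfc continuous_const).inter hboxopen).measure_pos volume
        ⟨u0, hu0, hu0box⟩
  refine ⟨hPD, ?_⟩
  -- the symmetry argument
  set e : MIdx d r → ℝ := Pi.single (mZero d r) (1 : ℝ) with he
  set D : Matrix (MIdx d r) (MIdx d r) ℝ :=
    Matrix.diagonal fun s : MIdx d r => (-1 : ℝ) ^ (s.val i0 : ℕ) with hD
  have hzeroval : ∀ k, ((mZero d r).val k : ℕ) = 0 := fun k => rfl
  have hF3 : ∀ s : MIdx d r,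
      M s (mZero d r) = (1 + (-1 : ℝ) ^ (s.val i0 : ℕ)) * v s := by
    intro s
    rw [hMF, hvF]
    simp_rw [hzeroval, add_zero]
    rw [← Finset.mul_prod_erase _ _ (Finset.mem_univ i0),
      ← Finset.mul_prod_erase _ (fun k => if k = i0 then a (s.val k : ℕ) else c (s.val k : ℕ))
        (Finset.mem_univ i0), if_pos rfl]
    rw [Finset.prod_congr rfl
      (fun k hk => if_neg (Finset.ne_of_mem_erase hk))]
    rw [hca, mul_assoc]
  have hF4 : ∀ s t : MIdx d r,
      ((-1 : ℝ) ^ (s.val i0 : ℕ) * (-1 : ℝ) ^ (t.val i0 : ℕ)) * M s t = M s t := by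
    intro s t
    rcases Nat.even_or_odd ((s.val i0 : ℕ) + (t.val i0 : ℕ)) with hev | hod
    · rw [← pow_add, hev.neg_one_pow, one_mul]
    · have hz : M s t = 0 := by
        rw [hMF]
        refine Finset.prod_eq_zero (Finset.mem_univ i0) ?_
        rw [hc]
        simp only [hod.neg_one_pow]
        norm_num
      rw [hz, mul_zero]
  have hDD : D * D = 1 := by
    rw [hD, Matrix.diagonal_mul_diagonal]
    rw [show (fun s : MIdx d r => (-1 : ℝ) ^ (s.val i0 : ℕ) * (-1 : ℝ) ^ (s.val i0 : ℕ))
      = fun _ => (1 : ℝ) from funext fun s => by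
        rw [← pow_add]; exact (Even.add_self _).neg_one_pow]
    exact Matrix.diagonal_one
  have hDMD : D * M * D = M := by
    ext s t
    rw [Matrix.mul_diagonal, Matrix.diagonal_mul]
    calc (-1 : ℝ) ^ (s.val i0 : ℕ) * M s t * (-1 : ℝ) ^ (t.val i0 : ℕ)
        = ((-1 : ℝ) ^ (s.val i0 : ℕ) * (-1 : ℝ) ^ (t.val i0 : ℕ)) * M s t := by ring
      _ = M s t := hF4 s t
  have hMD : M * D = D * M := by
    conv_lhs => rw [← hDMD]
    rw [Matrix.mul_assoc, hDD, Matrix.mul_one]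
  have hu : IsUnit M.det := hPD.det_pos.ne'.isUnit
  have hMinv : M⁻¹ * M = 1 := Matrix.nonsing_inv_mul M hu
  have hMinv' : M * M⁻¹ = 1 := Matrix.mul_nonsing_inv M hu
  have hID : M⁻¹ * D = D * M⁻¹ := by
    calc M⁻¹ * D = M⁻¹ * D * (M * M⁻¹) := by rw [hMinv', mul_one]
      _ = M⁻¹ * ((D * M) * M⁻¹) := by simp only [Matrix.mul_assoc]
      _ = M⁻¹ * ((M * D) * M⁻¹) := by rw [hMD]
      _ = (M⁻¹ * M) * (D * M⁻¹) := by simp only [Matrix.mul_assoc]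
      _ = D * M⁻¹ := by rw [hMinv, one_mul]
  have hMe : M.mulVec e = v + D.mulVec v := by
    funext s
    rw [Pi.add_apply, hD, Matrix.mulVec_diagonal, he, Matrix.mulVec_single]
    show M s (mZero d r) * 1 = _
    rw [mul_one, hF3 s]
    ring
  have hkey : e = M⁻¹.mulVec v + D.mulVec (M⁻¹.mulVec v) := by
    have h1 : e = M⁻¹.mulVec (M.mulVec e) := by
      rw [Matrix.mulVec_mulVec, hMinv, Matrix.one_mulVec]
    rw [h1, hMe, Matrix.mulVec_add]
    congr 1
    rw [Matrix.mulVec_mulVec, hID, ← Matrix.mulVec_mulVec]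
  have hfinal := congrFun hkey (mZero d r)
  rw [he, Pi.single_eq_same, Pi.add_apply, hD, Matrix.mulVec_diagonal] at hfinal
  rw [hzeroval, pow_zero, one_mul] at hfinal
  rw [he, single_dotProduct, one_mul]
  linarith

end
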